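/- Let (Ω, 𝒜, ℙ) be a probability space, n ≥ 1, k ≤ n, δ ∈ (0,1), and P_k = {p ∈ [0,1]^n : ∑_i p_i = k}. Let M : ℝ_{≥0}^n → ℝ be monotone, i.e., coordinatewise v ≤ v' implies M(v) ≤ M(v'). Let μ ∈ ℝ_{≥0}^n be fixed and let p* ∈ P_k be a maximizer of p ↦ M(μ ⊙ p) over P_k. For each t ∈ ℕ let μ↓_t, μ↑_t : Ω → ℝ_{≥0}^n be measurable, and let p↓_t, p↑_t : Ω → P_k be measurable maps such that, for every ω, p↓_t(ω) maximizes p ↦ M(μ↓_t(ω) ⊙ p) over P_k and p↑_t(ω) maximizes p ↦ M(μ↑_t(ω) ⊙ p) over P_k. If for every coordinate i one has ℙ(∃ t ∈ ℕ : μ_i ∉ [μ↓_{t,i}, μ↑_{t,i}]) ≤ δ/n, then ℙ(∃ t ∈ ℕ : M(μ ⊙ p*) ∉ [M(μ↓_t ⊙ p↓_t), M(μ↑_t ⊙ p↑_t)]) ≤ δ. -/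

import Mathlib

/-- The set of allocation policies distributing `k` resources among `n` individuals. -/
def Pk (n k : ℕ) : Set (Fin n → ℝ) :=
  {p | (∀ i, 0 ≤ p i ∧ p i ≤ 1) ∧ ∑ i, p i = (k : ℝ)}

theorem stmt_1 {Ω : Type*} [MeasurableSpace Ω] (P : MeasureTheory.Measure Ω)
    [MeasureTheory.IsProbabilityMeasure P]
    {n : ℕ} (hn : 0 < n) (k : ℕ) (hk : k ≤ n)
    (δ : ℝ) (hδ : δ ∈ Set.Ioo (0 : ℝ) 1)
    (M : (Fin n → ℝ) → ℝ)
    (hM : ∀ v v' : Fin n → ℝ, (∀ i, 0 ≤ v i) → (∀ i, 0 ≤ v' i) →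
      (∀ i, v i ≤ v' i) → M v ≤ M v')
    (μ : Fin n → ℝ) (hμ : ∀ i, 0 ≤ μ i)
    (pstar : Fin n → ℝ) (hpstar : pstar ∈ Pk n k)
    (hpstar_opt : ∀ p ∈ Pk n k, M (fun i => μ i * p i) ≤ M (fun i => μ i * pstar i))
    (μdown μup : ℕ → Ω → Fin n → ℝ)
    (hmeas_down : ∀ t, Measurable (μdown t)) (hmeas_up : ∀ t, Measurable (μup t))
    (hnn_down : ∀ t ω i, 0 ≤ μdown t ω i) (hnn_up : ∀ t ω i, 0 ≤ μup t ω i)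
    (pdown pup : ℕ → Ω → Fin n → ℝ)
    (hmeas_pdown : ∀ t, Measurable (pdown t)) (hmeas_pup : ∀ t, Measurable (pup t))
    (hpdown_mem : ∀ t ω, pdown t ω ∈ Pk n k) (hpup_mem : ∀ t ω, pup t ω ∈ Pk n k)
    (hpdown_opt : ∀ t ω, ∀ p ∈ Pk n k,
      M (fun i => μdown t ω i * p i) ≤ M (fun i => μdown t ω i * pdown t ω i))
    (hpup_opt : ∀ t ω, ∀ p ∈ Pk n k,
      M (fun i => μup t ω i * p i) ≤ M (fun i => μup t ω i * pup t ω i))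
    (hCS : ∀ i : Fin n,
      P {ω | ∃ t : ℕ, μ i ∉ Set.Icc (μdown t ω i) (μup t ω i)} ≤ ENNReal.ofReal (δ / n)) :
    P {ω | ∃ t : ℕ, M (fun i => μ i * pstar i) ∉
        Set.Icc (M (fun i => μdown t ω i * pdown t ω i))
                (M (fun i => μup t ω i * pup t ω i))}
      ≤ ENNReal.ofReal δ := by

  have hsub : {ω | ∃ t : ℕ, M (fun i => μ i * pstar i) ∉
        Set.Icc (M (fun i => μdown t ω i * pdown t ω i))
                (M (fun i => μup t ω i * pup t ω i))}
      ⊆ ⋃ i : Fin n, {ω | ∃ t : ℕ, μ i ∉ Set.Icc (μdown t ω i) (μup t ω i)} := by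
    intro ω hω
    by_contra hcon
    simp only [Set.mem_iUnion, Set.mem_setOf_eq, not_exists] at hcon
    obtain ⟨t, ht⟩ := hω
    push_neg at hcon
    have hgood : ∀ i, μdown t ω i ≤ μ i ∧ μ i ≤ μup t ω i := by
      intro i
      have := hcon i t
      rw [Set.mem_Icc] at this
      exact this
    apply ht
    constructor
    · calc M (fun i => μdown t ω i * pdown t ω i)
          ≤ M (fun i => μ i * pdown t ω i) := by
            apply hM
            · exact fun i => mul_nonneg (hnn_down t ω i) ((hpdown_mem t ω).1 i).1
            · exact fun i => mul_nonneg (hμ i) ((hpdown_mem t ω).1 i).1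
            · exact fun i => mul_le_mul_of_nonneg_right (hgood i).1 ((hpdown_mem t ω).1 i).1
        _ ≤ M (fun i => μ i * pstar i) := hpstar_opt _ (hpdown_mem t ω)
    · calc M (fun i => μ i * pstar i)
          ≤ M (fun i => μup t ω i * pstar i) := by
            apply hM
            · exact fun i => mul_nonneg (hμ i) ((hpstar).1 i).1
            · exact fun i => mul_nonneg (hnn_up t ω i) ((hpstar).1 i).1
            · exact fun i => mul_le_mul_of_nonneg_right (hgood i).2 ((hpstar).1 i).1
        _ ≤ M (fun i => μup t ω i * pup t ω i) := hpup_opt t ω _ hpstar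
  calc P _ ≤ P (⋃ i : Fin n, {ω | ∃ t : ℕ, μ i ∉ Set.Icc (μdown t ω i) (μup t ω i)}) :=
        MeasureTheory.measure_mono hsub
    _ ≤ ∑ i : Fin n, P {ω | ∃ t : ℕ, μ i ∉ Set.Icc (μdown t ω i) (μup t ω i)} := by
        rw [← tsum_fintype (L := SummationFilter.unconditional _)]
        exact MeasureTheory.measure_iUnion_le _
    _ ≤ ∑ _i : Fin n, ENNReal.ofReal (δ / n) := Finset.sum_le_sum fun i _ => hCS i
    _ = ENNReal.ofReal δ := by
        rw [Finset.sum_const, Finset.card_univ, Fintype.card_fin, nsmul_eq_mul]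
        rw [← ENNReal.ofReal_natCast n, ← ENNReal.ofReal_mul (by positivity)]
        congr 1
        field_simp
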